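/- Let v,k,r,λ,y be positive integers with y≥2, λ≥2, 2<k<v−1, satisfying r(k−1)=λ(v−1) and (y−1)(r−1)=(k−1)(λ−1) and y<k. Then v < (k²−k)/(y−1). -/
import Mathlib


/-- From r(k−1)=λ(v−1), (y−1)(r−1)=(k−1)(λ−1) and y < k one gets
v < (k²−k)/(y−1). -/
theorem stmt2 (v k r lam y : ℕ)
    (hv : 0 < v) (hk0 : 0 < k) (hr : 0 < r) (hlam : 2 ≤ lam) (hy : 2 ≤ y)
    (hk : 2 < k) (hkv : k < v - 1)
    (h1 : r * (k - 1) = lam * (v - 1))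
    (h2 : (y - 1) * (r - 1) = (k - 1) * (lam - 1))
    (hyk : y < k) :
    (v : ℚ) < ((k : ℚ) ^ 2 - k) / ((y : ℚ) - 1) := by
  have h1q : (r : ℚ) * ((k : ℚ) - 1) = (lam : ℚ) * ((v : ℚ) - 1) := by
    have := congrArg (Nat.cast : ℕ → ℚ) h1
    push_cast [Nat.cast_sub hv, Nat.cast_sub hk0] at this
    linarith [this]
  have h2q : ((y : ℚ) - 1) * ((r : ℚ) - 1) = ((k : ℚ) - 1) * ((lam : ℚ) - 1) := by
    have := congrArg (Nat.cast : ℕ → ℚ) h2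
    push_cast [Nat.cast_sub hr, Nat.cast_sub hk0,
      Nat.cast_sub (by omega : 1 ≤ y), Nat.cast_sub (by omega : 1 ≤ lam)] at this
    linarith [this]
  have hyq : (2 : ℚ) ≤ (y : ℚ) := by exact_mod_cast hy
  have hlq : (2 : ℚ) ≤ (lam : ℚ) := by exact_mod_cast hlam
  have hkq : (3 : ℚ) ≤ (k : ℚ) := by exact_mod_cast hk
  have hykq : (y : ℚ) + 1 ≤ (k : ℚ) := by exact_mod_cast hyk
  have hy1 : (0 : ℚ) < (y : ℚ) - 1 := by linarith
  rw [lt_div_iff₀ hy1]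
  nlinarith [mul_pos (show (0:ℚ) < (k:ℚ) - y by linarith)
      (show (0:ℚ) < (lam:ℚ) + k - 1 by linarith),
    mul_le_mul_of_nonneg_left h1q.le (show (0:ℚ) ≤ (y:ℚ) - 1 by linarith),
    mul_le_mul_of_nonneg_left h1q.ge (show (0:ℚ) ≤ (y:ℚ) - 1 by linarith),
    mul_le_mul_of_nonneg_left h2q.le (show (0:ℚ) ≤ (k:ℚ) - 1 by linarith),
    mul_le_mul_of_nonneg_left h2q.ge (show (0:ℚ) ≤ (k:ℚ) - 1 by linarith)]
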